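/- Let (I|J, I'|J') be a cortege for m,n whose refinement (I°, I•, J°, J•) is not (∅,∅,∅,∅). Then there exists a feasible matching for this cortege. -/

import Mathlib

/-- A cortege `(I|J, I'|J')` for `m,n`. -/
structure Cortege (m n : ℕ) where
  I : Finset ℕ
  J : Finset ℕ
  I' : Finset ℕ
  J' : Finset ℕ
  hIm : I ⊆ Finset.Icc 1 m
  hI'm : I' ⊆ Finset.Icc 1 m
  hJn : J ⊆ Finset.Icc 1 n
  hJ'n : J' ⊆ Finset.Icc 1 n
  hIJ : I.card = J.card
  hI'J' : I'.card = J'.card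

/-- Elements of the ground set `Y^r ⊔ Y^c`: `Sum.inl i` is a row index, `Sum.inr j`
a column index. -/
abbrev Elt := ℕ ⊕ ℕ

/-- The linear order on `Y^r ⊔ Y^c`: rows in increasing order first, then columns
in decreasing order. -/
def cLT : Elt → Elt → Prop
  | Sum.inl i, Sum.inl i' => i < i'
  | Sum.inl _, Sum.inr _ => True
  | Sum.inr _, Sum.inl _ => False
  | Sum.inr j, Sum.inr j' => j' < j

instance : DecidableRel cLT := fun a b =>
  match a, b with
  | Sum.inl i, Sum.inl i' => inferInstanceAs (Decidable (i < i'))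
  | Sum.inl _, Sum.inr _ => inferInstanceAs (Decidable True)
  | Sum.inr _, Sum.inl _ => inferInstanceAs (Decidable False)
  | Sum.inr j, Sum.inr j' => inferInstanceAs (Decidable (j' < j))

/-- Two elements lie on the same side (both rows or both columns). -/
abbrev sameSide (a b : Elt) : Prop := a.isLeft = b.isLeft

/-- The underlying numerical index of an element. -/
abbrev eVal : Elt → ℕ := Sum.elim id id

/-- The numerically smaller member of a couple (used for couples lying in one side). -/
def numMin (p : Elt × Elt) : Elt := if eVal p.1 ≤ eVal p.2 then p.1 else p.2

namespace Cortege
variable {m n : ℕ}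

/-- White elements of the refinement: `I° = I - I'` (rows) and `J° = J - J'` (columns). -/
def whites (S : Cortege m n) : Finset Elt :=
  (S.I \ S.I').image Sum.inl ∪ (S.J \ S.J').image Sum.inr

/-- Black elements of the refinement: `I• = I' - I` (rows) and `J• = J' - J` (columns). -/
def blacks (S : Cortege m n) : Finset Elt :=
  (S.I' \ S.I).image Sum.inl ∪ (S.J' \ S.J).image Sum.inr

/-- The ground set `Y^r ⊔ Y^c` of a cortege. -/
def ground (S : Cortege m n) : Finset Elt := S.whites ∪ S.blacks

end Cortege

/-- `M` is a feasible matching for the cortege `S`.  Couples are stored as pairs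
`(a, b)` with `a` preceding `b` in the linear order `cLT`. -/
def IsFeasible {m n : ℕ} (S : Cortege m n) (M : Finset (Elt × Elt)) : Prop :=
  (∀ p ∈ M, p.1 ∈ S.ground ∧ p.2 ∈ S.ground ∧ cLT p.1 p.2) ∧
  (∀ y ∈ S.ground, ∃! p, p ∈ M ∧ (p.1 = y ∨ p.2 = y)) ∧
  (∀ p ∈ M, (sameSide p.1 p.2 → (p.1 ∈ S.whites ↔ p.2 ∈ S.blacks)) ∧
            (¬ sameSide p.1 p.2 → (p.1 ∈ S.whites ↔ p.2 ∈ S.whites))) ∧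
  (∀ p ∈ M, ∀ p' ∈ M, ¬ (cLT p.1 p'.1 ∧ cLT p'.1 p.2 ∧ cLT p.2 p'.2))

/-- The set of elements covered by a set of couples. -/
def coveredBy (Φ : Finset (Elt × Elt)) : Finset Elt :=
  Φ.image Prod.fst ∪ Φ.image Prod.snd

/-- `T` is obtained from `S` by the index exchange operation using the couples `Φ`:
the intersections and unions of the row (resp. column) sets are unchanged, and
the white/black color is flipped exactly on the elements covered by `Φ`. -/
def IsExchange {m n : ℕ} (S T : Cortege m n) (Φ : Finset (Elt × Elt)) : Prop :=
  S.I ∩ S.I' = T.I ∩ T.I' ∧ S.J ∩ S.J' = T.J ∩ T.J' ∧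
  S.I ∪ S.I' = T.I ∪ T.I' ∧ S.J ∪ S.J' = T.J ∪ T.J' ∧
  ∀ a ∈ S.ground,
    (a ∈ coveredBy Φ → (a ∈ S.whites ↔ a ∈ T.blacks)) ∧
    (a ∉ coveredBy Φ → (a ∈ S.whites ↔ a ∈ T.whites))

/-- The couples of `M` on which the white/black colorings of `S` and `T` differ. -/
def differSet {m n : ℕ} (S T : Cortege m n) (M : Finset (Elt × Elt)) :
    Finset (Elt × Elt) :=
  M.filter (fun p =>
    ¬ (p.1 ∈ S.whites ↔ p.1 ∈ T.whites) ∨ ¬ (p.2 ∈ S.whites ↔ p.2 ∈ T.whites))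

/-- `ζ°(S;Φ)`: the number of couples of `Φ` lying within one side whose numerically
smaller element is white. -/
def zetaWhite {m n : ℕ} (S : Cortege m n) (Φ : Finset (Elt × Elt)) : ℕ :=
  (Φ.filter (fun p => sameSide p.1 p.2 ∧ numMin p ∈ S.whites)).card

/-- `ζ•(S;Φ)`: the number of couples of `Φ` lying within one side whose numerically
smaller element is black. -/
def zetaBlack {m n : ℕ} (S : Cortege m n) (Φ : Finset (Elt × Elt)) : ℕ :=
  (Φ.filter (fun p => sameSide p.1 p.2 ∧ numMin p ∈ S.blacks)).card

/-- Configurations for an (indexed) family of corteges: pairs of a member of the family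
and a feasible matching for it. -/
def Config {m n : ℕ} {ι : Type} (F : ι → Cortege m n) : Type :=
  {p : ι × Finset (Elt × Elt) // IsFeasible (F p.1) p.2}

/-- The quadruple `(F, G, α, β)` is `q`-balanced. -/
def QBalanced {m n : ℕ} {ι κ : Type} (F : ι → Cortege m n) (G : κ → Cortege m n)
    (α : ι → ℤ) (β : κ → ℤ) : Prop :=
  ∃ γ : Config F ≃ Config G, ∀ c : Config F,
    ((γ c).1.2 = c.1.2) ∧
    IsExchange (F c.1.1) (G (γ c).1.1) (differSet (F c.1.1) (G (γ c).1.1) c.1.2) ∧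
    β (γ c).1.1 - α c.1.1 =
      (zetaWhite (F c.1.1) (differSet (F c.1.1) (G (γ c).1.1) c.1.2) : ℤ) -
      (zetaBlack (F c.1.1) (differSet (F c.1.1) (G (γ c).1.1) c.1.2) : ℤ)

/-- The two families `F`, `G` are (jointly) homogeneous. -/
def Homogeneous {m n : ℕ} {ι κ : Type} (F : ι → Cortege m n) (G : κ → Cortege m n) : Prop :=
  ∀ S T : Cortege m n,
    ((∃ i, F i = S) ∨ (∃ k, G k = S)) → ((∃ i, F i = T) ∨ (∃ k, G k = T)) →
    S.I ∪ S.I' = T.I ∪ T.I' ∧ S.I ∩ S.I' = T.I ∩ T.I' ∧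
    S.J ∪ S.J' = T.J ∪ T.J' ∧ S.J ∩ S.J' = T.J ∩ T.J'


lemma cLT_trans {a b c : Elt} (h1 : cLT a b) (h2 : cLT b c) : cLT a c := by
  rcases a with a|a <;> rcases b with b|b <;> rcases c with c|c <;>
    simp only [cLT] at * <;> omega

lemma cLT_irrefl (a : Elt) : ¬ cLT a a := by
  rcases a with a|a <;> simp [cLT]

lemma cLT_tri (a b : Elt) : cLT a b ∨ a = b ∨ cLT b a := by
  rcases a with a|a <;> rcases b with b|b <;> simp [cLT] <;> omega

def cLE (a b : Elt) : Prop := cLT a b ∨ a = b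

instance : DecidableRel cLE := fun _ _ => instDecidableOr

instance : IsTrans Elt cLE where
  trans a b c h1 h2 := by
    rcases h1 with h1|rfl
    · rcases h2 with h2|rfl
      · exact Or.inl (cLT_trans h1 h2)
      · exact Or.inl h1
    · exact h2

instance : IsAntisymm Elt cLE where
  antisymm a b h1 h2 := by
    rcases h1 with h1|rfl
    · rcases h2 with h2|rfl
      · exact absurd (cLT_trans h1 h2) (cLT_irrefl a)
      · rfl
    · rfl

instance : IsTotal Elt cLE where
  total a b := by
    rcases cLT_tri a b with h|h|h
    · exact Or.inl (Or.inl h)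
    · exact Or.inl (Or.inr h)
    · exact Or.inr (Or.inl h)

lemma adj_pair (f : Elt → Bool) : ∀ L : List Elt, (∃ a ∈ L, f a = true) →
    (∃ a ∈ L, f a = false) →
    ∃ l₁ x y l₂, L = l₁ ++ x :: y :: l₂ ∧ f x ≠ f y := by
  intro L
  induction L with
  | nil => rintro ⟨a, ha, -⟩; simp at ha
  | cons c t ih =>
    rintro ⟨a, ha, hat⟩ ⟨b, hb, hbf⟩
    match t with
    | [] =>
      simp at ha hb
      subst ha; subst hb; simp [hat] at hbf
    | d :: t' =>
      by_cases hcd : f c = f d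
      · have hboth : (∃ a ∈ d :: t', f a = true) ∧ (∃ a ∈ d :: t', f a = false) := by
          constructor
          · rcases List.mem_cons.mp ha with rfl | h
            · exact ⟨d, List.mem_cons_self, hcd ▸ hat⟩
            · exact ⟨a, h, hat⟩
          · rcases List.mem_cons.mp hb with rfl | h
            · exact ⟨d, List.mem_cons_self, hcd ▸ hbf⟩
            · exact ⟨b, h, hbf⟩
        obtain ⟨l₁, x, y, l₂, heq, hne⟩ := ih hboth.1 hboth.2
        exact ⟨c :: l₁, x, y, l₂, by simp [heq], hne⟩
      · exact ⟨[], c, d, t', rfl, hcd⟩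

lemma matching_exists (f : Elt → Bool) : ∀ (N : ℕ) (L : List Elt), L.length ≤ N →
    L.Pairwise cLT →
    (L.filter (fun a => f a = true)).length = (L.filter (fun a => f a = false)).length →
    ∃ M : List (Elt × Elt),
      (∀ p ∈ M, p.1 ∈ L ∧ p.2 ∈ L ∧ cLT p.1 p.2 ∧ f p.1 ≠ f p.2) ∧
      (∀ y ∈ L, ∃ p ∈ M, p.1 = y ∨ p.2 = y) ∧
      (∀ p ∈ M, ∀ q ∈ M, ∀ y, (p.1 = y ∨ p.2 = y) → (q.1 = y ∨ q.2 = y) → p = q) ∧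
      (∀ p ∈ M, ∀ q ∈ M, ¬ (cLT p.1 q.1 ∧ cLT q.1 p.2 ∧ cLT p.2 q.2)) := by
  intro N
  induction N with
  | zero =>
    intro L hlen _ _
    have : L = [] := List.length_eq_zero_iff.mp (Nat.le_zero.mp hlen)
    subst this
    exact ⟨[], by simp, by simp, by simp, by simp⟩
  | succ N ih =>
    intro L hlen hP hbal
    by_cases hLnil : L = []
    · subst hLnil
      exact ⟨[], by simp, by simp, by simp, by simp⟩
    · have hTrue : ∃ a ∈ L, f a = true := by
        by_contra hno
        push_neg at hno
        have h1 : L.filter (fun a => f a = true) = [] :=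
          List.filter_eq_nil_iff.mpr (fun a ha => by simp [hno a ha])
        have h2 : L.filter (fun a => f a = false) = L :=
          List.filter_eq_self.mpr (fun a ha => by simp [hno a ha])
        rw [h1, h2] at hbal
        exact hLnil (List.length_eq_zero_iff.mp hbal.symm)
      have hFalse : ∃ a ∈ L, f a = false := by
        by_contra hno
        push_neg at hno
        have hall : ∀ a ∈ L, f a = true := by
          intro a ha
          cases hfa : f a with
          | false => exact absurd hfa (hno a ha)
          | true => rfl
        have h1 : L.filter (fun a => f a = false) = [] :=
          List.filter_eq_nil_iff.mpr (fun a ha => by simp [hall a ha])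
        have h2 : L.filter (fun a => f a = true) = L :=
          List.filter_eq_self.mpr (fun a ha => by simp [hall a ha])
        rw [h1, h2] at hbal
        exact hLnil (List.length_eq_zero_iff.mp hbal)
      obtain ⟨l₁, x, y, l₂, heq, hxy⟩ := adj_pair f L hTrue hFalse
      subst heq
      rw [List.pairwise_append] at hP
      obtain ⟨hP1, hP2, hP3⟩ := hP
      rw [List.pairwise_cons] at hP2
      obtain ⟨hx, hP2'⟩ := hP2
      rw [List.pairwise_cons] at hP2'
      obtain ⟨hy, hl₂P⟩ := hP2'
      have hxy' : cLT x y := hx y (by simp)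
      have hxl₂ : ∀ z ∈ l₂, cLT x z := fun z hz => hx z (by simp [hz])
      have hl₁x : ∀ z ∈ l₁, cLT z x := fun z hz => hP3 z hz x (by simp)
      have hbetween : ∀ z ∈ l₁ ++ l₂, ¬ (cLT x z ∧ cLT z y) := by
        rintro z hz ⟨h1, h2⟩
        rcases List.mem_append.mp hz with hz' | hz'
        · exact cLT_irrefl x (cLT_trans h1 (hl₁x z hz'))
        · exact cLT_irrefl y (cLT_trans (hy z hz') h2)
      have hxnot : x ∉ l₁ ++ l₂ := by
        intro h
        rcases List.mem_append.mp h with h' | h'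
        · exact cLT_irrefl x (hl₁x x h')
        · exact cLT_irrefl x (hxl₂ x h')
      have hynot : y ∉ l₁ ++ l₂ := by
        intro h
        rcases List.mem_append.mp h with h' | h'
        · exact cLT_irrefl y (cLT_trans (hl₁x y h') hxy')
        · exact cLT_irrefl y (hy y h')
      have hP' : (l₁ ++ l₂).Pairwise cLT := by
        rw [List.pairwise_append]
        exact ⟨hP1, hl₂P, fun a ha b hb => hP3 a ha b (by simp [hb])⟩
      have hlen' : (l₁ ++ l₂).length ≤ N := by
        simp only [List.length_append, List.length_cons] at hlen ⊢
        omega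
      have hmemup : ∀ z, z ∈ l₁ ++ l₂ → z ∈ l₁ ++ x :: y :: l₂ := by
        intro z hz
        rcases List.mem_append.mp hz with h | h
        · exact List.mem_append.mpr (Or.inl h)
        · exact List.mem_append.mpr (Or.inr (by simp [h]))
      have hbal' : ((l₁ ++ l₂).filter (fun a => f a = true)).length =
          ((l₁ ++ l₂).filter (fun a => f a = false)).length := by
        cases hfx : f x with
        | true =>
          have hfy : f y = false := by
            cases hfy : f y with
            | false => rfl
            | true => exact absurd (hfx.trans hfy.symm) hxy
          simp only [List.filter_append, List.filter_cons, hfx, hfy,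
            List.length_append, List.length_cons] at hbal ⊢
          simp at hbal ⊢
          omega
        | false =>
          have hfy : f y = true := by
            cases hfy : f y with
            | true => rfl
            | false => exact absurd (hfx.trans hfy.symm) hxy
          simp only [List.filter_append, List.filter_cons, hfx, hfy,
            List.length_append, List.length_cons] at hbal ⊢
          simp at hbal ⊢
          omega
      obtain ⟨M', hmem', hcov', huniq', hcross'⟩ := ih (l₁ ++ l₂) hlen' hP' hbal'
      refine ⟨(x, y) :: M', ?_, ?_, ?_, ?_⟩
      · rintro p hp
        rcases List.mem_cons.mp hp with rfl | hp'
        · exact ⟨List.mem_append.mpr (Or.inr (by simp)),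
            List.mem_append.mpr (Or.inr (by simp)), hxy', hxy⟩
        · obtain ⟨h1, h2, h3, h4⟩ := hmem' p hp'
          exact ⟨hmemup _ h1, hmemup _ h2, h3, h4⟩
      · intro z hz
        rcases List.mem_append.mp hz with hz' | hz'
        · obtain ⟨p, hp, hpz⟩ := hcov' z (List.mem_append.mpr (Or.inl hz'))
          exact ⟨p, List.mem_cons_of_mem _ hp, hpz⟩
        · rcases List.mem_cons.mp hz' with h | hz''
          · exact ⟨(x, y), List.mem_cons_self, Or.inl h.symm⟩
          · rcases List.mem_cons.mp hz'' with h | hz'''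
            · exact ⟨(x, y), List.mem_cons_self, Or.inr h.symm⟩
            · obtain ⟨p, hp, hpz⟩ := hcov' z (List.mem_append.mpr (Or.inr hz'''))
              exact ⟨p, List.mem_cons_of_mem _ hp, hpz⟩
      · intro p hp q hq z hpz hqz
        rcases List.mem_cons.mp hp with rfl | hp' <;>
          rcases List.mem_cons.mp hq with h | hq'
        · rw [h]
        · exfalso
          obtain ⟨h1, h2, -, -⟩ := hmem' q hq'
          have hz : z ∈ l₁ ++ l₂ := by
            rcases hqz with h | h
            · exact h ▸ h1
            · exact h ▸ h2
          rcases hpz with h' | h'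
          · exact hxnot (by rw [show x = z from h']; exact hz)
          · exact hynot (by rw [show y = z from h']; exact hz)
        · exfalso
          subst h
          obtain ⟨h1, h2, -, -⟩ := hmem' p hp'
          have hz : z ∈ l₁ ++ l₂ := by
            rcases hpz with h | h
            · exact h ▸ h1
            · exact h ▸ h2
          rcases hqz with h' | h'
          · exact hxnot (by rw [show x = z from h']; exact hz)
          · exact hynot (by rw [show y = z from h']; exact hz)
        · exact huniq' p hp' q hq' z hpz hqz
      · intro p hp q hq
        rcases List.mem_cons.mp hp with rfl | hp' <;>
          rcases List.mem_cons.mp hq with h | hq'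
        · subst h
          rintro ⟨h1, -, -⟩
          exact cLT_irrefl x h1
        · rintro ⟨h1, h2, h3⟩
          obtain ⟨hq1, -, -, -⟩ := hmem' q hq'
          exact hbetween q.1 hq1 ⟨h1, h2⟩
        · subst h
          rintro ⟨h1, h2, h3⟩
          obtain ⟨-, hp2, -, -⟩ := hmem' p hp'
          exact hbetween p.2 hp2 ⟨h2, h3⟩
        · exact hcross' p hp' q hq'

section AuxFeasible

/-- The sign of an element relative to a cortege. -/
def sgnF {m n : ℕ} (S : Cortege m n) (a : Elt) : Bool :=
  (decide (a ∈ S.whites)) == a.isLeft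

lemma whites_blacks_disjoint {m n : ℕ} (S : Cortege m n) :
    Disjoint S.whites S.blacks := by
  rw [Finset.disjoint_left]
  intro a ha hb
  unfold Cortege.whites at ha
  unfold Cortege.blacks at hb
  simp only [Finset.mem_union, Finset.mem_image, Finset.mem_sdiff] at ha hb
  rcases a with i | j
  · rcases ha with ⟨i', ⟨h1, h2⟩, hi⟩ | ⟨j', _, hj⟩
    · rcases hb with ⟨i'', ⟨h3, h4⟩, hi'⟩ | ⟨j'', _, hj'⟩
      · cases Sum.inl_injective hi
        cases Sum.inl_injective hi'
        exact h2 h3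
      · exact absurd hj' (by simp)
    · exact absurd hj (by simp)
  · rcases ha with ⟨i', _, hi⟩ | ⟨j', ⟨h1, h2⟩, hj⟩
    · exact absurd hi (by simp)
    · rcases hb with ⟨i'', _, hi'⟩ | ⟨j'', ⟨h3, h4⟩, hj'⟩
      · exact absurd hi' (by simp)
      · cases Sum.inr_injective hj
        cases Sum.inr_injective hj'
        exact h2 h3

lemma mem_blacks_iff {m n : ℕ} (S : Cortege m n) {a : Elt} (ha : a ∈ S.ground) :
    a ∈ S.blacks ↔ a ∉ S.whites := by
  constructor
  · intro hb hw
    exact (Finset.disjoint_left.mp (whites_blacks_disjoint S)) hw hb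
  · intro hw
    rcases Finset.mem_union.mp ha with h | h
    · exact absurd h hw
    · exact h

lemma color_of_sgn {m n : ℕ} (S : Cortege m n) {a b : Elt}
    (ha : a ∈ S.ground) (hb : b ∈ S.ground) (hne : sgnF S a ≠ sgnF S b) :
    (sameSide a b → (a ∈ S.whites ↔ b ∈ S.blacks)) ∧
    (¬ sameSide a b → (a ∈ S.whites ↔ b ∈ S.whites)) := by
  have hb' := mem_blacks_iff S hb
  unfold sgnF at hne
  constructor
  · intro hss
    rw [hb']
    unfold sameSide at hss
    rw [hss] at hne
    by_cases haw : a ∈ S.whites <;> by_cases hbw : b ∈ S.whites <;>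
      simp [haw, hbw] at hne ⊢
  · intro hss
    unfold sameSide at hss
    have : a.isLeft = !b.isLeft := by
      cases h1 : a.isLeft <;> cases h2 : b.isLeft <;> simp_all
    rw [this] at hne
    by_cases haw : a ∈ S.whites <;> by_cases hbw : b ∈ S.whites <;>
      simp [haw, hbw] at hne ⊢ <;> simp_all

end AuxFeasible

lemma inl_mem_whites {m n : ℕ} (S : Cortege m n) (i : ℕ) :
    Sum.inl i ∈ S.whites ↔ i ∈ S.I \ S.I' := by
  simp [Cortege.whites]

lemma inr_mem_whites {m n : ℕ} (S : Cortege m n) (j : ℕ) :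
    Sum.inr j ∈ S.whites ↔ j ∈ S.J \ S.J' := by
  simp [Cortege.whites]

lemma sgn_balanced {m n : ℕ} (S : Cortege m n) :
    (S.ground.filter (fun a => sgnF S a = true)).card =
      (S.ground.filter (fun a => sgnF S a = false)).card := by
  classical
  set A := (S.I \ S.I').image (Sum.inl : ℕ → Elt) with hA
  set B := (S.J \ S.J').image (Sum.inr : ℕ → Elt) with hB
  set C := (S.I' \ S.I).image (Sum.inl : ℕ → Elt) with hC
  set D := (S.J' \ S.J).image (Sum.inr : ℕ → Elt) with hD
  have hg : S.ground = A ∪ B ∪ (C ∪ D) := rfl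
  have sgnA : ∀ a ∈ A, sgnF S a = true := by
    intro a ha
    obtain ⟨i, hi, rfl⟩ := Finset.mem_image.mp ha
    simp [sgnF, inl_mem_whites, hi]
  have sgnB : ∀ a ∈ B, ¬ sgnF S a = true := by
    intro a ha
    obtain ⟨j, hj, rfl⟩ := Finset.mem_image.mp ha
    simp [sgnF, inr_mem_whites, hj]
  have sgnC : ∀ a ∈ C, ¬ sgnF S a = true := by
    intro a ha
    obtain ⟨i, hi, rfl⟩ := Finset.mem_image.mp ha
    have hi2 : i ∉ S.I := (Finset.mem_sdiff.mp hi).2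
    simp [sgnF, inl_mem_whites, Finset.mem_sdiff, hi2]
  have sgnD : ∀ a ∈ D, sgnF S a = true := by
    intro a ha
    obtain ⟨j, hj, rfl⟩ := Finset.mem_image.mp ha
    have hj2 : j ∉ S.J := (Finset.mem_sdiff.mp hj).2
    simp [sgnF, inr_mem_whites, Finset.mem_sdiff, hj2]
  have ft : S.ground.filter (fun a => sgnF S a = true) = A ∪ D := by
    rw [hg, Finset.filter_union, Finset.filter_union, Finset.filter_union]
    rw [Finset.filter_true_of_mem sgnA, Finset.filter_true_of_mem sgnD,
        Finset.filter_false_of_mem sgnB, Finset.filter_false_of_mem sgnC]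
    simp
  have ff : S.ground.filter (fun a => sgnF S a = false) = B ∪ C := by
    rw [hg, Finset.filter_union, Finset.filter_union, Finset.filter_union]
    rw [Finset.filter_true_of_mem (fun a ha => Bool.eq_false_iff.mpr (sgnB a ha)),
        Finset.filter_true_of_mem (fun a ha => Bool.eq_false_iff.mpr (sgnC a ha)),
        Finset.filter_false_of_mem (fun a ha => by simp [sgnA a ha]),
        Finset.filter_false_of_mem (fun a ha => by simp [sgnD a ha])]
    simp
  have hAD : Disjoint A D := by
    rw [Finset.disjoint_left]
    rintro a ha hd
    obtain ⟨i, -, rfl⟩ := Finset.mem_image.mp ha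
    obtain ⟨j, -, hj⟩ := Finset.mem_image.mp hd
    exact absurd hj (by simp)
  have hBC : Disjoint B C := by
    rw [Finset.disjoint_left]
    rintro a ha hc
    obtain ⟨j, -, rfl⟩ := Finset.mem_image.mp ha
    obtain ⟨i, -, hi⟩ := Finset.mem_image.mp hc
    exact absurd hi (by simp)
  rw [ft, ff, Finset.card_union_of_disjoint hAD, Finset.card_union_of_disjoint hBC,
    hA, hB, hC, hD,
    Finset.card_image_of_injective _ Sum.inl_injective,
    Finset.card_image_of_injective _ Sum.inr_injective,
    Finset.card_image_of_injective _ Sum.inl_injective,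
    Finset.card_image_of_injective _ Sum.inr_injective]
  have c1 := Finset.card_sdiff_add_card_inter S.I S.I'
  have c2 := Finset.card_sdiff_add_card_inter S.I' S.I
  have c3 := Finset.card_sdiff_add_card_inter S.J S.J'
  have c4 := Finset.card_sdiff_add_card_inter S.J' S.J
  have e1 : (S.I ∩ S.I').card = (S.I' ∩ S.I).card := by rw [Finset.inter_comm]
  have e2 : (S.J ∩ S.J').card = (S.J' ∩ S.J).card := by rw [Finset.inter_comm]
  have h1 := S.hIJ
  have h2 := S.hI'J'
  omega

lemma length_filter_sort (s : Finset Elt) (p : Elt → Bool) :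
    ((Finset.sort s cLE).filter p).length = (s.filter (fun a => p a = true)).card := by
  rw [((Finset.sort_perm_toList s cLE).filter p).length_eq]
  have h1 : (Finset.filter (fun a => p a = true) s).val = Multiset.filter (fun a => p a = true) s.val :=
    Finset.filter_val _ _
  have h2 : (Finset.filter (fun a => p a = true) s).card =
      Multiset.card (Multiset.filter (fun a => p a = true) s.val) := by
    rw [Finset.card, h1]
  rw [h2]
  conv_rhs => rw [← Multiset.coe_toList s.val]
  rw [Multiset.filter_coe, Multiset.coe_card]
  simp only [Finset.toList]
  simp

/-- Any cortege with nonempty refinement admits a feasible matching. -/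
theorem exists_feasible_matching
    {m n : ℕ} (S : Cortege m n)
    (h : ¬ (S.I \ S.I' = ∅ ∧ S.I' \ S.I = ∅ ∧ S.J \ S.J' = ∅ ∧ S.J' \ S.J = ∅)) :
    ∃ M : Finset (Elt × Elt), IsFeasible S M := by
  classical
  set L := Finset.sort S.ground cLE with hL
  have hmemL : ∀ a : Elt, a ∈ L ↔ a ∈ S.ground := fun a => Finset.mem_sort cLE
  have hnd : L.Nodup := Finset.sort_nodup S.ground cLE
  have hsorted : L.Pairwise cLE := Finset.pairwise_sort S.ground cLE
  have hPL : L.Pairwise cLT := by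
    refine (List.Pairwise.and hsorted hnd).imp ?_
    rintro a b ⟨hle, hne⟩
    exact hle.resolve_right hne
  have hbal : (L.filter (fun a => sgnF S a = true)).length =
      (L.filter (fun a => sgnF S a = false)).length := by
    rw [hL]
    rw [show (fun a => decide (sgnF S a = true)) = (fun a => sgnF S a) from by
      funext a; simp]
    rw [show (fun a => decide (sgnF S a = false)) = (fun a => !(sgnF S a)) from by
      funext a; simp]
    rw [length_filter_sort, length_filter_sort]
    have e1 : S.ground.filter (fun a => sgnF S a = true) =
        S.ground.filter (fun a => (sgnF S a) = true) := rfl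
    have e2 : S.ground.filter (fun a => (!(sgnF S a)) = true) =
        S.ground.filter (fun a => sgnF S a = false) := by
      apply Finset.filter_congr
      intro a _
      simp
    rw [e2]
    exact sgn_balanced S
  obtain ⟨M, hmem, hcov, huniq, hcross⟩ :=
    matching_exists (sgnF S) L.length L le_rfl hPL hbal
  refine ⟨M.toFinset, ?_, ?_, ?_, ?_⟩
  · intro p hp
    obtain ⟨h1, h2, h3, -⟩ := hmem p (List.mem_toFinset.mp hp)
    exact ⟨(hmemL _).mp h1, (hmemL _).mp h2, h3⟩
  · intro y hy
    obtain ⟨p, hp, hpy⟩ := hcov y ((hmemL _).mpr hy)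
    refine ⟨p, ⟨List.mem_toFinset.mpr hp, hpy⟩, ?_⟩
    rintro q ⟨hq, hqy⟩
    exact huniq q (List.mem_toFinset.mp hq) p hp y hqy hpy
  · intro p hp
    obtain ⟨h1, h2, -, h4⟩ := hmem p (List.mem_toFinset.mp hp)
    exact color_of_sgn S ((hmemL _).mp h1) ((hmemL _).mp h2) h4
  · intro p hp q hq
    exact hcross p (List.mem_toFinset.mp hp) q (List.mem_toFinset.mp hq)
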